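/- Let A be a commutative unital prime ring with char(A) ≠ 2 and let S, T: A → A be additive maps with T bijective and S(x²) = T(x)² for all x ∈ A. Then T is a weighted Jordan homomorphism: c = T(1) is invertible and c·T(x∘y) = T(x)∘T(y) for all x, y ∈ A. -/

import Mathlib

/-- Let `A` be a commutative unital prime ring (an integral domain)
with char ≠ 2, and `S, T : A → A` additive with `T` bijective and `S(x²) = T(x)²`.
Then `T` is a weighted Jordan homomorphism. -/
theorem stmt15 {A : Type*} [CommRing A] [IsDomain A] (hch : (2 : A) ≠ 0)
    (S T : A → A)
    (hS : ∀ x y : A, S (x + y) = S x + S y)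
    (hT : ∀ x y : A, T (x + y) = T x + T y)
    (hbij : Function.Bijective T)
    (h : ∀ x : A, S (x ^ 2) = (T x) ^ 2) :
    IsUnit (T 1) ∧ ∀ x y : A, T 1 * T (x * y + y * x) = T x * T y + T y * T x := by
  set c := T 1 with hc
  -- key polarization identity
  have key : ∀ x y : A, S (x * y + y * x) = 2 * T x * T y := by
    intro x y
    have h1 := h (x + y)
    have e1 : (x + y) ^ 2 = x ^ 2 + (x * y + y * x) + y ^ 2 := by ring
    rw [e1, hS, hS, h x, h y, hT] at h1
    have h2 : T x ^ 2 + S (x * y + y * x) + T y ^ 2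
        = T x ^ 2 + 2 * T x * T y + T y ^ 2 := by
      rw [h1]; ring
    linear_combination h2
  -- S x = T x * c
  have hSc : ∀ x : A, S x = T x * c := by
    intro x
    have h1 := key x 1
    have e1 : x * 1 + 1 * x = x + x := by ring
    rw [e1, hS] at h1
    have h2 : 2 * S x = 2 * (T x * c) := by rw [hc]; linear_combination h1
    exact mul_left_cancel₀ hch h2
  constructor
  · obtain ⟨u, hu⟩ := hbij.2 1
    have h1 := h u
    rw [hSc, hu] at h1
    exact IsUnit.of_mul_eq_one (a := c) (T (u ^ 2)) (by linear_combination h1)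
  · intro x y
    have h1 := key x y
    rw [hSc] at h1
    linear_combination h1
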